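/- arXiv:1901.08653 — 2 statements merged into one kernel-verified Lean document; each statement's English description precedes it below -/
import Mathlib

section
/- For every integer g ≥ 1, the following identity holds in the polynomial ring ℤ[X]: X^{2g+1} + X = ∑_{k=0}^{⌊g/2⌋} (-1)^k · T(g, k) · X^{2k+1} · (X² + 1)^{g-2k}, where T(g, k) = C(g-k, k) + C(g-k-1, k-1) is the integer (g/(g-k))·C(g-k, k) (with T(g, 0) = 1). -/
open Polynomial

/-- The Lucas-coefficient triangle `T(g, k) = C(g-k, k) + C(g-k-1, k-1)` as an integer,
with the convention `C(m, -1) = 0`, so that `T(g, 0) = 1`. -/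
def lucasT (g k : ℕ) : ℤ :=
  (Nat.choose (g - k) k : ℤ) + if k = 0 then 0 else (Nat.choose (g - k - 1) (k - 1) : ℤ)

lemma lucasT_pascal (g k : ℕ) (hg : 1 ≤ g) (hk1 : 1 ≤ k) (hk : k ≤ g / 2 + 1) :
    lucasT (g + 2) k = lucasT (g + 1) k + lucasT g (k - 1) := by
  have hkg : k ≤ g := by omega
  obtain ⟨j, rfl⟩ : ∃ j, k = j + 1 := ⟨k - 1, by omega⟩
  obtain ⟨a, rfl⟩ : ∃ a, g = a + j + 1 := ⟨g - (j+1), by omega⟩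
  simp only [lucasT, show a+j+1+2-(j+1) = a+2 by omega, show a+2-1 = a+1 by omega,
    show a+j+1+1-(j+1) = a+1 by omega, show a+1-1 = a by omega,
    show a+j+1-j = a+1 by omega, show j+1-1 = j by omega,
    Nat.succ_ne_zero, if_false]
  rcases j with _ | i
  · simp [Nat.choose_succ_succ]; ring
  · simp only [Nat.succ_ne_zero, if_false, show i+1-1 = i by omega]
    push_cast [Nat.choose_succ_succ (a+1) (i+1), Nat.choose_succ_succ a i]
    ring

lemma lucasT_top_zero (m : ℕ) (hm : 1 ≤ m) : lucasT (2 * m + 1) (m + 1) = 0 := by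
  simp only [lucasT, show 2*m+1-(m+1) = m by omega, Nat.succ_ne_zero, if_false,
    show m + 1 - 1 = m by omega]
  rw [Nat.choose_eq_zero_of_lt (by omega), Nat.choose_eq_zero_of_lt (by omega)]
  simp

/-- The right-hand side of the identity, as a function of `g`. -/
noncomputable def lockS (g : ℕ) : ℤ[X] :=
  ∑ k ∈ Finset.range (g / 2 + 1),
    Polynomial.C ((-1 : ℤ) ^ k * lucasT g k) * X ^ (2 * k + 1) * (X ^ 2 + 1) ^ (g - 2 * k)

lemma lockS_rec (g : ℕ) (hg : 1 ≤ g) :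
    lockS (g + 2) = (X ^ 2 + 1) * lockS (g + 1) - X ^ 2 * lockS g := by
  have hA : (X ^ 2 + 1 : ℤ[X]) * lockS (g + 1) =
      ∑ k ∈ Finset.range (g / 2 + 2),
        Polynomial.C ((-1 : ℤ) ^ k * lucasT (g + 1) k) * X ^ (2 * k + 1) *
          (X ^ 2 + 1) ^ (g + 2 - 2 * k) := by
    rw [lockS, Finset.mul_sum]
    have step : ∀ k ∈ Finset.range ((g + 1) / 2 + 1),
        (X ^ 2 + 1 : ℤ[X]) * (Polynomial.C ((-1 : ℤ) ^ k * lucasT (g + 1) k) * X ^ (2 * k + 1) *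
          (X ^ 2 + 1) ^ (g + 1 - 2 * k)) =
        Polynomial.C ((-1 : ℤ) ^ k * lucasT (g + 1) k) * X ^ (2 * k + 1) *
          (X ^ 2 + 1) ^ (g + 2 - 2 * k) := by
      intro k hk
      rw [Finset.mem_range] at hk
      have : g + 2 - 2 * k = (g + 1 - 2 * k) + 1 := by omega
      rw [this, pow_succ]
      ring
    rw [Finset.sum_congr rfl step]
    rcases Nat.even_or_odd g with ⟨m, hm⟩ | ⟨m, hm⟩
    · subst hm
      have hm1 : 1 ≤ m := by omega
      have hz : lucasT (m + m + 1) (m + 1) = 0 := by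
        rw [show m + m + 1 = 2 * m + 1 by ring]; exact lucasT_top_zero m hm1
      rw [show (m + m) / 2 + 2 = (m + 1) + 1 by omega, show (m + m + 1) / 2 + 1 = m + 1 by omega,
        Finset.sum_range_succ _ (m + 1), hz]
      simp
    · subst hm
      rw [show (2 * m + 1 + 1) / 2 + 1 = m + 2 by omega, show (2 * m + 1) / 2 + 2 = m + 2 by omega]
  have hB : (∑ k ∈ Finset.range (g / 2 + 2),
        if k = 0 then 0 else
          Polynomial.C ((-1 : ℤ) ^ k * lucasT g (k - 1)) * X ^ (2 * k + 1) *
            (X ^ 2 + 1) ^ (g + 2 - 2 * k)) = -((X ^ 2 : ℤ[X]) * lockS g) := by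
    rw [Finset.sum_range_succ', lockS, Finset.mul_sum, ← Finset.sum_neg_distrib]
    simp only [if_neg (Nat.succ_ne_zero _), if_pos rfl, eq_self_iff_true, if_true, add_zero,
      Nat.add_sub_cancel]
    apply Finset.sum_congr rfl
    intro k hk
    have h : g + 2 - 2 * (k + 1) = g - 2 * k := by omega
    rw [h]; simp only [pow_succ, map_mul, map_neg, map_one]
    ring
  have key : lockS (g + 2) =
      (∑ k ∈ Finset.range (g / 2 + 2),
        Polynomial.C ((-1 : ℤ) ^ k * lucasT (g + 1) k) * X ^ (2 * k + 1) *
          (X ^ 2 + 1) ^ (g + 2 - 2 * k)) +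
      (∑ k ∈ Finset.range (g / 2 + 2),
        if k = 0 then 0 else
          Polynomial.C ((-1 : ℤ) ^ k * lucasT g (k - 1)) * X ^ (2 * k + 1) *
            (X ^ 2 + 1) ^ (g + 2 - 2 * k)) := by
    rw [← Finset.sum_add_distrib, lockS, show (g + 2) / 2 + 1 = g / 2 + 2 by omega]
    apply Finset.sum_congr rfl
    intro k hk
    rw [Finset.mem_range] at hk
    rcases Nat.eq_zero_or_pos k with rfl | hk1
    · simp [lucasT]
    · rw [if_neg (by omega), lucasT_pascal g k hg hk1 (by omega), mul_add, Polynomial.C_add]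
      ring
  rw [key, ← hA, hB, sub_eq_add_neg]

theorem eq_lockS (g : ℕ) (hg : 1 ≤ g) : (X : ℤ[X]) ^ (2 * g + 1) + X = lockS g := by
  have base1 : (X : ℤ[X]) ^ (2 * 1 + 1) + X = lockS 1 := by
    norm_num [lockS, lucasT, Finset.sum_range_one]
    ring
  have base2 : (X : ℤ[X]) ^ (2 * 2 + 1) + X = lockS 2 := by
    norm_num [lockS, lucasT, Finset.sum_range_succ, Finset.sum_range_one]
    ring
  have main : ∀ n : ℕ, ((X : ℤ[X]) ^ (2 * (n + 1) + 1) + X = lockS (n + 1)) ∧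
      ((X : ℤ[X]) ^ (2 * (n + 2) + 1) + X = lockS (n + 2)) := by
    intro n
    induction n with
    | zero => exact ⟨base1, base2⟩
    | succ n ih =>
      refine ⟨ih.2, ?_⟩
      rw [show n + 1 + 2 = (n + 1) + 2 by ring, lockS_rec (n + 1) (by omega),
        ← ih.1, ← ih.2]
      ring
  obtain ⟨m, rfl⟩ : ∃ m, g = m + 1 := ⟨g - 1, by omega⟩
  exact (main m).1

/-- In `ℤ[X]`, for `g ≥ 1`:
`X^{2g+1} + X = ∑_{k=0}^{⌊g/2⌋} (-1)^k T(g, k) X^{2k+1} (X² + 1)^{g-2k}`. -/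
theorem lockwood_polynomial_identity (g : ℕ) (hg : 1 ≤ g) :
    (X : ℤ[X]) ^ (2 * g + 1) + X =
      ∑ k ∈ Finset.range (g / 2 + 1),
        Polynomial.C ((-1 : ℤ) ^ k * lucasT g k) * X ^ (2 * k + 1) *
          (X ^ 2 + 1) ^ (g - 2 * k) := by
  exact eq_lockS g hg
end

section
/- Let g ≥ 1 be an odd integer, set a = (g+1)/2, and let b, c ∈ ℂ with b^g = c. Let x, y ∈ ℂ with x ≠ 0 and y² = x^{2g+1} + c·x. Then the point (u, v) := ((x² + b)/x, y/x^a) satisfies v² = ∑_{k=0}^{⌊g/2⌋} (-1)^k · T(g, k) · b^k · u^{g-2k}, where T(g, k) = C(g-k, k) + C(g-k-1, k-1) is the integer (g/(g-k))·C(g-k, k). -/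
lemma lucasT_zero (n : ℕ) : lucasT n 0 = 1 := by
  simp [lucasT]

lemma lucasT_rec (n k : ℕ) (hk : 1 ≤ k) (hkn : k ≤ n) :
    lucasT (n + 2) k = lucasT (n + 1) k + lucasT n (k - 1) := by
  obtain ⟨j, rfl⟩ : ∃ j, k = j + 1 := ⟨k - 1, by omega⟩
  obtain ⟨m, rfl⟩ : ∃ m, n = j + 1 + m := ⟨n - (j + 1), by omega⟩
  unfold lucasT
  have e1 : j + 1 + m + 2 - (j + 1) = m + 2 := by omega
  have e2 : j + 1 + m + 2 - (j + 1) - 1 = m + 1 := by omega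
  have e3 : j + 1 + m + 1 - (j + 1) = m + 1 := by omega
  have e4 : j + 1 + m + 1 - (j + 1) - 1 = m := by omega
  have e5 : j + 1 + m - (j + 1 - 1) = m + 1 := by omega
  have e6 : j + 1 + m - (j + 1 - 1) - 1 = m := by omega
  have e7 : j + 1 - 1 = j := by omega
  rw [e2, e1, e4, e3, e6, e5, e7]
  simp only [Nat.succ_ne_zero, if_neg]
  rcases Nat.eq_zero_or_pos j with rfl | hj
  · simp [Nat.choose_one_right]
    push_cast
    ring
  · obtain ⟨i, rfl⟩ : ∃ i, j = i + 1 := ⟨j - 1, by omega⟩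
    have p1 : (m + 2).choose (i + 1 + 1) = (m + 1).choose (i + 1) + (m + 1).choose (i + 1 + 1) := by
      rw [show m + 2 = (m + 1) + 1 by omega]
      exact Nat.choose_succ_succ' (m + 1) (i + 1)
    have p2 : (m + 1).choose (i + 1) = m.choose i + m.choose (i + 1) := Nat.choose_succ_succ' m i
    simp only [Nat.succ_ne_zero, if_neg, Nat.add_sub_cancel]
    push_cast [p1, p2]
    ring

noncomputable def lsum (s t : ℂ) (n : ℕ) : ℂ :=
  ∑ k ∈ Finset.range (n / 2 + 1),
    ((-1 : ℤ) ^ k * lucasT n k : ℤ) * (s * t) ^ k * (s + t) ^ (n - 2 * k)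

lemma lucasT_two_mul (m : ℕ) (hm : 1 ≤ m) : lucasT (2 * m) m = 2 := by
  unfold lucasT
  rw [show 2 * m - m - 1 = m - 1 by omega, show 2 * m - m = m by omega,
    if_neg (by omega : ¬ m = 0), Nat.choose_self, Nat.choose_self]
  norm_num

lemma lsum_rec (s t : ℂ) (n : ℕ) (hn : 1 ≤ n) :
    lsum s t (n + 2) = (s + t) * lsum s t (n + 1) - s * t * lsum s t n := by
  unfold lsum
  rw [Finset.mul_sum, Finset.mul_sum]
  rcases Nat.even_or_odd n with ⟨m, rfl⟩ | ⟨m, rfl⟩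
  · -- n = 2m, m ≥ 1
    have hm : 1 ≤ m := by omega
    rw [show (m + m + 2) / 2 + 1 = (m + 1) + 1 by omega,
        show (m + m + 1) / 2 + 1 = m + 1 by omega,
        show (m + m) / 2 + 1 = m + 1 by omega]
    rw [Finset.sum_range_succ (n := m + 1), Finset.sum_range_succ' _ m,
        Finset.sum_range_succ' (n := m), Finset.sum_range_succ (n := m)]
    have h0 : ((-1 : ℤ) ^ 0 * lucasT (m + m + 2) 0 : ℤ) * (s * t) ^ 0 * (s + t) ^ (m + m + 2 - 2 * 0)
        = (s + t) * (((-1 : ℤ) ^ 0 * lucasT (m + m + 1) 0 : ℤ) * (s * t) ^ 0 * (s + t) ^ (m + m + 1 - 2 * 0)) := by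
      rw [lucasT_zero, lucasT_zero]
      rw [show m + m + 2 - 2 * 0 = (m + m + 1 - 2 * 0) + 1 by omega]
      push_cast; ring
    have htop : ((-1 : ℤ) ^ (m + 1) * lucasT (m + m + 2) (m + 1) : ℤ) * (s * t) ^ (m + 1) * (s + t) ^ (m + m + 2 - 2 * (m + 1))
        = - (s * t * (((-1 : ℤ) ^ m * lucasT (m + m) m : ℤ) * (s * t) ^ m * (s + t) ^ (m + m - 2 * m))) := by
      have t1 : lucasT (m + m + 2) (m + 1) = 2 := by
        rw [show m + m + 2 = 2 * (m + 1) by omega]; exact lucasT_two_mul (m + 1) (by omega)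
      have t2 : lucasT (m + m) m = 2 := by
        rw [show m + m = 2 * m by omega]; exact lucasT_two_mul m hm
      rw [t1, t2, show m + m + 2 - 2 * (m + 1) = 0 by omega, show m + m - 2 * m = 0 by omega]
      push_cast; ring
    have hmid : ∀ k ∈ Finset.range m,
        ((-1 : ℤ) ^ (k + 1) * lucasT (m + m + 2) (k + 1) : ℤ) * (s * t) ^ (k + 1) * (s + t) ^ (m + m + 2 - 2 * (k + 1))
        = (s + t) * (((-1 : ℤ) ^ (k + 1) * lucasT (m + m + 1) (k + 1) : ℤ) * (s * t) ^ (k + 1) * (s + t) ^ (m + m + 1 - 2 * (k + 1)))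
          - s * t * (((-1 : ℤ) ^ k * lucasT (m + m) k : ℤ) * (s * t) ^ k * (s + t) ^ (m + m - 2 * k)) := by
      intro k hk
      rw [Finset.mem_range] at hk
      obtain ⟨d, hd⟩ : ∃ d, m - 1 - k = d := ⟨_, rfl⟩
      have hr := lucasT_rec (m + m) (k + 1) (by omega) (by omega)
      rw [show m + m + 2 - 2 * (k + 1) = 2 * d + 2 by omega,
          show m + m + 1 - 2 * (k + 1) = 2 * d + 1 by omega,
          show m + m - 2 * k = 2 * d + 2 by omega,
          show m + m + 2 = m + m + 1 + 1 by omega]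
      rw [show m + m + 1 + 1 = m + m + 2 by omega] at hr ⊢
      rw [show k + 1 - 1 = k by omega] at hr
      rw [hr]
      push_cast; ring
    rw [Finset.sum_congr rfl hmid, Finset.sum_sub_distrib, h0, htop]
    ring
  · -- n = 2m+1
    rw [show (2 * m + 1 + 2) / 2 + 1 = (m + 1) + 1 by omega,
        show (2 * m + 1 + 1) / 2 + 1 = (m + 1) + 1 by omega,
        show (2 * m + 1) / 2 + 1 = m + 1 by omega]
    rw [Finset.sum_range_succ' _ (m + 1), Finset.sum_range_succ' _ (m + 1)]
    have h0 : ((-1 : ℤ) ^ 0 * lucasT (2 * m + 1 + 2) 0 : ℤ) * (s * t) ^ 0 * (s + t) ^ (2 * m + 1 + 2 - 2 * 0)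
        = (s + t) * (((-1 : ℤ) ^ 0 * lucasT (2 * m + 1 + 1) 0 : ℤ) * (s * t) ^ 0 * (s + t) ^ (2 * m + 1 + 1 - 2 * 0)) := by
      rw [lucasT_zero, lucasT_zero]
      rw [show 2 * m + 1 + 2 - 2 * 0 = (2 * m + 1 + 1 - 2 * 0) + 1 by omega]
      push_cast; ring
    have hmid : ∀ k ∈ Finset.range (m + 1),
        ((-1 : ℤ) ^ (k + 1) * lucasT (2 * m + 1 + 2) (k + 1) : ℤ) * (s * t) ^ (k + 1) * (s + t) ^ (2 * m + 1 + 2 - 2 * (k + 1))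
        = (s + t) * (((-1 : ℤ) ^ (k + 1) * lucasT (2 * m + 1 + 1) (k + 1) : ℤ) * (s * t) ^ (k + 1) * (s + t) ^ (2 * m + 1 + 1 - 2 * (k + 1)))
          - s * t * (((-1 : ℤ) ^ k * lucasT (2 * m + 1) k : ℤ) * (s * t) ^ k * (s + t) ^ (2 * m + 1 - 2 * k)) := by
      intro k hk
      rw [Finset.mem_range] at hk
      obtain ⟨d, hd⟩ : ∃ d, m - k = d := ⟨_, rfl⟩
      have hr := lucasT_rec (2 * m + 1) (k + 1) (by omega) (by omega)
      rw [show k + 1 - 1 = k by omega] at hr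
      rw [show 2 * m + 1 + 2 - 2 * (k + 1) = 2 * d + 1 by omega,
          show 2 * m + 1 + 1 - 2 * (k + 1) = 2 * d by omega,
          show 2 * m + 1 - 2 * k = 2 * d + 1 by omega, hr]
      push_cast; ring
    rw [Finset.sum_congr rfl hmid, Finset.sum_sub_distrib, h0]
    ring

lemma lsum_one (s t : ℂ) : lsum s t 1 = s + t := by
  simp [lsum, lucasT]

lemma lsum_two (s t : ℂ) : lsum s t 2 = s ^ 2 + t ^ 2 := by
  rw [lsum, show 2 / 2 + 1 = 2 by omega, Finset.sum_range_succ, Finset.sum_range_one]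
  simp [lucasT]
  ring

lemma lsum_eq (s t : ℂ) (n : ℕ) (hn : 1 ≤ n) : lsum s t n = s ^ n + t ^ n := by
  obtain ⟨p, rfl⟩ : ∃ p, n = p + 1 := ⟨n - 1, by omega⟩
  clear hn
  induction p using Nat.strong_induction_on with
  | _ p ih =>
    match p with
    | 0 => simpa using lsum_one s t
    | 1 => simpa using lsum_two s t
    | (q + 2) =>
      have h := lsum_rec s t (q + 1) (by omega)
      rw [show q + 1 + 2 = q + 2 + 1 by omega, show q + 1 + 1 = q + 1 + 1 by omega] at h
      rw [h, ih (q + 1) (by omega), ih q (by omega)]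
      ring

/-- For odd `g ≥ 1`, `a = (g+1)/2`, and `b, c ∈ ℂ` with `b^g = c`, the map
`φ(x, y) = ((x² + b)/x, y/x^a)` sends affine points (with `x ≠ 0`) of the curve
`y² = x^{2g+1} + cx` to affine points of the curve
`y² = ∑_{k=0}^{⌊g/2⌋} (-1)^k T(g, k) b^k x^{g-2k}`. -/
theorem hyperelliptic_morphism_twisted (g : ℕ) (hg : 1 ≤ g) (hodd : Odd g)
    (b c : ℂ) (hbc : b ^ g = c) (x y : ℂ) (hx : x ≠ 0)
    (hC : y ^ 2 = x ^ (2 * g + 1) + c * x) :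
    (y / x ^ ((g + 1) / 2)) ^ 2 =
      ∑ k ∈ Finset.range (g / 2 + 1),
        ((-1 : ℤ) ^ k * lucasT g k : ℤ) * b ^ k * ((x ^ 2 + b) / x) ^ (g - 2 * k) := by
  have h1 : x * (b / x) = b := by field_simp
  have h2 : x + b / x = (x ^ 2 + b) / x := by field_simp
  have hlt := lsum_eq x (b / x) g hg
  rw [lsum] at hlt
  simp only [h1, h2] at hlt
  rw [hlt]
  obtain ⟨m, rfl⟩ := hodd
  rw [show (2 * m + 1 + 1) / 2 = m + 1 by omega]
  rw [div_pow, hC, ← hbc]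
  rw [show (x ^ (m + 1)) ^ 2 = x ^ (2 * m + 1) * x by ring]
  rw [div_pow]
  field_simp
  ring
end
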